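/- Let (A, n) be a Noetherian local ring and let Â be the n-adic completion of A. If I is an n-primary ideal of A, then I is a reduction of a properly larger ideal of A if and only if IÂ is a reduction of a properly larger ideal of Â; consequently I is integrally closed in A if and only if IÂ is integrally closed in Â. -/

import Mathlib

noncomputable section

/-- `r` is integral over the ideal `I`: it satisfies a monic equation
`r^n + a₁ r^(n-1) + ⋯ + aₙ = 0` with `aᵢ ∈ Iⁱ`. -/
def IsIntegralOverIdeal {R : Type*} [CommRing R] (I : Ideal R) (r : R) : Prop :=
  ∃ n : ℕ, 0 < n ∧ ∃ a : ℕ → R, (∀ i ∈ Finset.Icc 1 n, a i ∈ I ^ i) ∧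
    r ^ n + ∑ i ∈ Finset.Icc 1 n, a i * r ^ (n - i) = 0

/-- An ideal is integrally closed if every element integral over it belongs to it. -/
def IsIntegrallyClosedIdeal {R : Type*} [CommRing R] (I : Ideal R) : Prop :=
  ∀ r : R, IsIntegralOverIdeal I r → r ∈ I

/-- `I` is a reduction of `J`: `I ⊆ J` and `I·Jⁿ⁻¹ = Jⁿ` for some positive integer `n`. -/
def IsReductionOf {R : Type*} [CommRing R] (I J : Ideal R) : Prop :=
  I ≤ J ∧ ∃ n : ℕ, 0 < n ∧ I * J ^ (n - 1) = J ^ n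

open AdicCompletion

section Aux

variable {A : Type*} [CommRing A] (Q : Ideal A)

private theorem smul_top_eq' (n : ℕ) : (Q ^ n • ⊤ : Ideal A) = Q ^ n := by ext x; simp

private theorem mem_map_of_eval_eq_zero [IsNoetherianRing A] (K : ℕ)
    (b : AdicCompletion Q A) (hb : evalₐ Q K b = 0) :
    b ∈ (Q ^ K).map (algebraMap A (AdicCompletion Q A)) := by
  obtain ⟨f, rfl⟩ := AdicCompletion.mk_surjective Q A b
  obtain ⟨s, g, hg⟩ := Submodule.fg_iff_exists_fin_generating_family.mp
    (IsNoetherian.noetherian (Q ^ K))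
  have hfK : f.val K ∈ Q ^ K := by
    rw [evalₐ_mk, Ideal.Quotient.eq_zero_iff_mem] at hb
    exact hb
  obtain ⟨e0, he0⟩ : ∃ e0 : Fin s → A, (∑ i, e0 i * g i) = f.val K := by
    have h1 : f.val K ∈ Submodule.span A (Set.range g) := hg ▸ hfK
    obtain ⟨c, hc⟩ := Finsupp.mem_span_range_iff_exists_finsupp.mp h1
    refine ⟨c, ?_⟩
    rw [← hc, Finsupp.sum_fintype _ _ (fun i => by simp)]
    simp [mul_comm, smul_eq_mul]
  have key : ∀ n : ℕ, ∃ e : Fin s → A, (∀ i, e i ∈ Q ^ n) ∧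
      (∑ i, e i * g i) = f.val (n + K + 1) - f.val (n + K) := by
    intro n
    have hd : f.val (n + K + 1) - f.val (n + K) ∈ Q ^ (n + K) := by
      have h := f.property (Nat.le_succ (n + K))
      rw [SModEq.sub_mem, smul_top_eq'] at h
      have h2 := (Q ^ (n + K)).neg_mem h
      simpa using h2
    have hd2 : f.val (n + K + 1) - f.val (n + K)
        ∈ Q ^ n • Submodule.span A (Set.range g) := by
      rw [hg]
      show _ ∈ (Q ^ n • (Q ^ K : Ideal A) : Submodule A A)
      rw [Ideal.smul_eq_mul, ← pow_add]
      exact hd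
    obtain ⟨a, ha, hsum⟩ := (Submodule.mem_ideal_smul_span_iff_exists_sum (Q ^ n) g _).mp hd2
    refine ⟨a, fun i => ha i, ?_⟩
    rw [← hsum, Finsupp.sum_fintype _ _ (fun i => by simp)]
    simp [mul_comm, smul_eq_mul]
  choose e he1 he2 using key
  set c : Fin s → ℕ → A := fun i n => e0 i + ∑ j ∈ Finset.range n, e j i with hc
  have hsum_c : ∀ n, (∑ i, c i n * g i) = f.val (n + K) := by
    intro n
    induction n with
    | zero => simpa [c] using he0
    | succ n ih =>
        have h3 : (∑ i, c i (n+1) * g i) = (∑ i, c i n * g i) + ∑ i, e n i * g i := by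
          simp [c, Finset.sum_range_succ, add_mul, Finset.sum_add_distrib]
          ring
        rw [h3, ih, he2 n]
        have h4 : n + 1 + K = n + K + 1 := by omega
        rw [h4]; ring
  have hcauchy : ∀ i (n : ℕ), c i n ≡ c i (n + 1) [SMOD (Q ^ n • ⊤ : Submodule A A)] := by
    intro i n
    rw [SModEq.sub_mem, smul_top_eq']
    simpa [c, Finset.sum_range_succ] using (Q ^ n).neg_mem (he1 n i)
  set C : Fin s → AdicCompletion Q A := fun i =>
    AdicCompletion.mk Q A (AdicCauchySequence.mk Q A (c i) (hcauchy i)) with hC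
  have heq : AdicCompletion.mk Q A f = ∑ i, algebraMap A (AdicCompletion Q A) (g i) * C i := by
    ext n
    rw [AdicCompletion.val_sum, Finset.sum_apply]
    have h5 : ∀ i, (algebraMap A (AdicCompletion Q A) (g i) * C i).val n
        = Submodule.Quotient.mk (p := (Q ^ n • ⊤ : Submodule A A)) (g i * c i n) := by
      intro i
      rfl
    rw [Finset.sum_congr rfl (fun i _ => h5 i)]
    have h6 : (∑ i, Submodule.Quotient.mk (p := (Q ^ n • ⊤ : Submodule A A)) (g i * c i n))
        = Submodule.Quotient.mk (p := (Q ^ n • ⊤ : Submodule A A)) (∑ i, g i * c i n) :=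
      (map_sum (Ideal.Quotient.mk (Q ^ n • ⊤ : Ideal A)) (fun i => g i * c i n)
        Finset.univ).symm
    rw [h6]
    have h1 : (∑ i, g i * c i n) = f.val (n + K) := by
      rw [← hsum_c n]; exact Finset.sum_congr rfl (fun i _ => mul_comm _ _)
    rw [h1, AdicCompletion.mk_apply_coe, Submodule.mkQ_apply]
    exact (AdicCauchySequence.mk_eq_mk (Nat.le_add_right n K) f).symm
  rw [heq]
  refine Ideal.sum_mem _ (fun i _ => Ideal.mul_mem_right _ _ ?_)
  exact Ideal.mem_map_of_mem _ (hg ▸ Submodule.subset_span (Set.mem_range_self i))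

/-- Every element of the completion is congruent to an element of `A` modulo `map (Q^K)`. -/
private theorem exists_approx [IsNoetherianRing A] (K : ℕ) (b : AdicCompletion Q A) :
    ∃ a : A, b - algebraMap A (AdicCompletion Q A) a
      ∈ (Q ^ K).map (algebraMap A (AdicCompletion Q A)) := by
  obtain ⟨f, rfl⟩ := AdicCompletion.mk_surjective Q A b
  refine ⟨f.val K, mem_map_of_eval_eq_zero Q K _ ?_⟩
  rw [map_sub, evalₐ_mk, AlgHom.commutes, Ideal.Quotient.algebraMap_eq, sub_self]

/-- If `Q^K ≤ J` then `J` is the contraction of its extension to the completion. -/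
private theorem comap_map_eq (K : ℕ) (J : Ideal A) (hJ : Q ^ K ≤ J) :
    (J.map (algebraMap A (AdicCompletion Q A))).comap (algebraMap A (AdicCompletion Q A)) = J := by
  refine le_antisymm ?_ Ideal.le_comap_map
  intro a ha
  rw [Ideal.mem_comap] at ha
  set ψ : AdicCompletion Q A →+* A ⧸ J :=
    (Ideal.Quotient.factor hJ).comp (evalₐ Q K).toRingHom with hψ
  have hψa : ∀ x : A, ψ (algebraMap A (AdicCompletion Q A) x) = Ideal.Quotient.mk J x := by
    intro x
    have h0 : (evalₐ Q K).toRingHom ((algebraMap A (AdicCompletion Q A)) x)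
        = Ideal.Quotient.mk (Q ^ K) x := by
      show evalₐ Q K (algebraMap A (AdicCompletion Q A) x) = _
      rw [AlgHom.commutes, Ideal.Quotient.algebraMap_eq]
    rw [hψ, RingHom.comp_apply, h0, Ideal.Quotient.factor_mk]
  have hker : J.map (algebraMap A (AdicCompletion Q A)) ≤ RingHom.ker ψ := by
    rw [Ideal.map_le_iff_le_comap]
    intro x hx
    rw [Ideal.mem_comap, RingHom.mem_ker, hψa, Ideal.Quotient.eq_zero_iff_mem]
    exact hx
  have := hker ha
  rw [RingHom.mem_ker, hψa, Ideal.Quotient.eq_zero_iff_mem] at this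
  exact this

/-- Extension-contraction identity for ideals of the completion containing `map (Q^K)`. -/
private theorem map_comap_eq [IsNoetherianRing A] (K : ℕ)
    (J' : Ideal (AdicCompletion Q A))
    (hJ' : (Q ^ K).map (algebraMap A (AdicCompletion Q A)) ≤ J') :
    (J'.comap (algebraMap A (AdicCompletion Q A))).map (algebraMap A (AdicCompletion Q A)) = J' := by
  refine le_antisymm Ideal.map_comap_le ?_
  intro b hb
  obtain ⟨a, ha⟩ := exists_approx Q K b
  have hFa : algebraMap A (AdicCompletion Q A) a ∈ J' := by
    have h1 : algebraMap A (AdicCompletion Q A) a = b - (b - algebraMap A (AdicCompletion Q A) a) := by ring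
    rw [h1]
    exact Ideal.sub_mem _ hb (hJ' ha)
  have h2 : b = algebraMap A (AdicCompletion Q A) a + (b - algebraMap A (AdicCompletion Q A) a) := by ring
  rw [h2]
  exact Ideal.add_mem _ (Ideal.mem_map_of_mem _ (Ideal.mem_comap.mpr hFa))
    (Ideal.map_mono (Ideal.map_le_iff_le_comap.mp hJ') ha)

end Aux

section Main

variable {A : Type*} [CommRing A] [IsNoetherianRing A]

private theorem reduction_corr (Q I : Ideal A) (k : ℕ) (hk : Q ^ k ≤ I) :
    (∃ J : Ideal A, I < J ∧ IsReductionOf I J) ↔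
      (∃ J' : Ideal (AdicCompletion Q A),
        Ideal.map (algebraMap A (AdicCompletion Q A)) I < J' ∧
        IsReductionOf (Ideal.map (algebraMap A (AdicCompletion Q A)) I) J') := by
  have hQI : ∀ i : ℕ, Q ^ (k * i) ≤ I ^ i := fun i => by
    rw [pow_mul]; exact Ideal.pow_right_mono hk i
  constructor
  · rintro ⟨J, hIJ, hle, n, hn, heqn⟩
    have hJk : Q ^ k ≤ J := le_trans hk hIJ.le
    refine ⟨J.map (algebraMap A (AdicCompletion Q A)), ?_, Ideal.map_mono hIJ.le, n, hn, ?_⟩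
    · refine lt_of_le_of_ne (Ideal.map_mono hIJ.le) (fun h => hIJ.ne ?_)
      rw [← comap_map_eq Q k I hk, ← comap_map_eq Q k J hJk, h]
    · rw [← Ideal.map_pow, ← Ideal.map_pow, ← Ideal.map_mul, heqn]
  · rintro ⟨J', hlt, hle', n, hn, heqn'⟩
    set J := J'.comap (algebraMap A (AdicCompletion Q A)) with hJdef
    have hmapQk : Ideal.map (algebraMap A (AdicCompletion Q A)) (Q ^ k) ≤ J' :=
      le_trans (Ideal.map_mono hk) hlt.le
    have hmapJ : J.map (algebraMap A (AdicCompletion Q A)) = J' := map_comap_eq Q k J' hmapQk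
    have hIJle : I ≤ J := le_trans Ideal.le_comap_map (Ideal.comap_mono hlt.le)
    have hIJ : I < J := lt_of_le_of_ne hIJle (fun h => hlt.ne (by rw [h, hmapJ]))
    refine ⟨J, hIJ, hIJle, n, hn, ?_⟩
    have hpow : Q ^ (k * n) ≤ I * J ^ (n - 1) := by
      refine le_trans (hQI n) ?_
      have h1 : I ^ n = I * I ^ (n - 1) := by
        conv_lhs => rw [show n = 1 + (n - 1) by omega]
        rw [pow_add, pow_one]
      rw [h1]
      exact Ideal.mul_mono_right (Ideal.pow_right_mono hIJle _)
    have hpow2 : Q ^ (k * n) ≤ J ^ n := le_trans (hQI n) (Ideal.pow_right_mono hIJle n)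
    have hmapeq : Ideal.map (algebraMap A (AdicCompletion Q A)) (I * J ^ (n - 1))
        = Ideal.map (algebraMap A (AdicCompletion Q A)) (J ^ n) := by
      rw [Ideal.map_mul, Ideal.map_pow, Ideal.map_pow, hmapJ]
      exact heqn'
    calc I * J ^ (n-1)
        = (Ideal.map (algebraMap A (AdicCompletion Q A)) (I * J ^ (n-1))).comap
            (algebraMap A (AdicCompletion Q A)) := (comap_map_eq Q (k*n) _ hpow).symm
      _ = (Ideal.map (algebraMap A (AdicCompletion Q A)) (J ^ n)).comap
            (algebraMap A (AdicCompletion Q A)) := by rw [hmapeq]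
      _ = J ^ n := comap_map_eq Q (k*n) _ hpow2

set_option synthInstance.maxHeartbeats 1000000 in
set_option maxHeartbeats 1000000 in
private theorem intclosed_corr (Q I : Ideal A) (k : ℕ) (hk : Q ^ k ≤ I) :
    IsIntegrallyClosedIdeal I ↔
      IsIntegrallyClosedIdeal (Ideal.map (algebraMap A (AdicCompletion Q A)) I) := by
  have hQI : ∀ i : ℕ, Q ^ (k * i) ≤ I ^ i := fun i => by
    rw [pow_mul]; exact Ideal.pow_right_mono hk i
  have hcomapI : ∀ i : ℕ,
      (Ideal.map (algebraMap A (AdicCompletion Q A)) (I ^ i)).comap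
        (algebraMap A (AdicCompletion Q A)) = I ^ i :=
    fun i => comap_map_eq Q (k * i) _ (hQI i)
  constructor
  · intro hIC b hb
    obtain ⟨n, hn, β, hβ, heqβ⟩ := hb
    obtain ⟨r, hr⟩ := exists_approx Q (k * n) b
    choose a ha using fun i : ℕ => exists_approx Q (k * n) (β i)
    have haI : ∀ i ∈ Finset.Icc 1 n, a i ∈ I ^ i := by
      intro i hi
      have hik : Ideal.map (algebraMap A (AdicCompletion Q A)) (Q ^ (k*n))
          ≤ Ideal.map (algebraMap A (AdicCompletion Q A)) (I ^ i) := by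
        refine Ideal.map_mono (le_trans (Ideal.pow_le_pow_right ?_) (hQI i))
        exact Nat.mul_le_mul_left k (Finset.mem_Icc.mp hi).2
      have hβi : β i ∈ Ideal.map (algebraMap A (AdicCompletion Q A)) (I ^ i) := by
        rw [Ideal.map_pow]; exact hβ i hi
      have hFa : algebraMap A (AdicCompletion Q A) (a i)
          ∈ Ideal.map (algebraMap A (AdicCompletion Q A)) (I ^ i) := by
        have h2 : algebraMap A (AdicCompletion Q A) (a i)
            = β i - (β i - algebraMap A (AdicCompletion Q A) (a i)) := by ring
        rw [h2]; exact Ideal.sub_mem _ hβi (hik (ha i))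
      rw [← hcomapI i]; exact Ideal.mem_comap.mpr hFa
    set s := r ^ n + ∑ i ∈ Finset.Icc 1 n, a i * r ^ (n - i) with hs
    have hFs : algebraMap A (AdicCompletion Q A) s
        ∈ Ideal.map (algebraMap A (AdicCompletion Q A)) (Q ^ (k*n)) := by
      set π := Ideal.Quotient.mk (Ideal.map (algebraMap A (AdicCompletion Q A)) (Q ^ (k*n)))
        with hπ
      have hπb : π (algebraMap A (AdicCompletion Q A) r) = π b := by
        rw [Ideal.Quotient.mk_eq_mk_iff_sub_mem]
        have h3 := (Ideal.map (algebraMap A (AdicCompletion Q A)) (Q ^ (k*n))).neg_mem hr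
        simpa using h3
      have hπa : ∀ i, π (algebraMap A (AdicCompletion Q A) (a i)) = π (β i) := by
        intro i
        rw [Ideal.Quotient.mk_eq_mk_iff_sub_mem]
        have h3 := (Ideal.map (algebraMap A (AdicCompletion Q A)) (Q ^ (k*n))).neg_mem (ha i)
        simpa using h3
      have hcalc : π (algebraMap A (AdicCompletion Q A) s)
          = π (b ^ n + ∑ i ∈ Finset.Icc 1 n, β i * b ^ (n - i)) := by
        rw [hs]
        simp only [map_add, map_pow, map_sum, map_mul, hπb, hπa]
      rw [heqβ, RingHom.map_zero] at hcalc
      exact Ideal.Quotient.eq_zero_iff_mem.mp hcalc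
    have hsQ : s ∈ I ^ n := by
      have h1 : s ∈ Q ^ (k*n) := by
        rw [← comap_map_eq Q (k*n) (Q ^ (k*n)) le_rfl]
        exact Ideal.mem_comap.mpr hFs
      exact hQI n h1
    have hint : IsIntegralOverIdeal I r := by
      refine ⟨n, hn, fun i => if i = n then a i - s else a i, ?_, ?_⟩
      · intro i hi
        by_cases h : i = n
        · subst h; simp only [if_pos rfl]; exact Ideal.sub_mem _ (haI _ hi) hsQ
        · simp only [if_neg h]; exact haI i hi
      · have hsplit : (∑ i ∈ Finset.Icc 1 n, (if i = n then a i - s else a i) * r ^ (n - i))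
            = (∑ i ∈ Finset.Icc 1 n, a i * r ^ (n - i)) - s := by
          have hterm : ∀ i ∈ Finset.Icc 1 n, (if i = n then a i - s else a i) * r ^ (n - i)
              = a i * r ^ (n - i) + (if i = n then -s else 0) := by
            intro i hi
            by_cases h : i = n
            · subst h; simp [Nat.sub_self]; ring
            · simp [h]
          rw [Finset.sum_congr rfl hterm, Finset.sum_add_distrib,
            Finset.sum_ite_eq' (Finset.Icc 1 n) n (fun _ => -s)]
          rw [if_pos (Finset.mem_Icc.mpr ⟨hn, le_rfl⟩)]
          ring
        rw [hsplit, hs]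
        ring
    have hrI : r ∈ I := hIC r hint
    have h4 : b = algebraMap A (AdicCompletion Q A) r
        + (b - algebraMap A (AdicCompletion Q A) r) := by ring
    rw [h4]
    refine Ideal.add_mem _ (Ideal.mem_map_of_mem _ hrI) ?_
    exact Ideal.map_mono (le_trans (Ideal.pow_le_pow_right
      (Nat.le_mul_of_pos_right k hn)) hk) hr
  · intro hIC' r hr
    obtain ⟨n, hn, a, haI, heqr⟩ := hr
    have hint : IsIntegralOverIdeal (Ideal.map (algebraMap A (AdicCompletion Q A)) I)
        (algebraMap A (AdicCompletion Q A) r) := by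
      refine ⟨n, hn, fun i => algebraMap A (AdicCompletion Q A) (a i), ?_, ?_⟩
      · intro i hi
        rw [← Ideal.map_pow]
        exact Ideal.mem_map_of_mem _ (haI i hi)
      · have h5 := congrArg (algebraMap A (AdicCompletion Q A)) heqr
        simpa [map_add, map_pow, map_sum, map_mul] using h5
    have hFr := hIC' _ hint
    have h6 := hcomapI 1
    rw [pow_one] at h6
    rw [← h6]
    exact Ideal.mem_comap.mpr hFr

end Main

/-- For an `n`-primary ideal `I` of a Noetherian local ring `(A, n)`,
`I` is a reduction of a properly larger ideal of `A` iff `IÂ` is a reduction of a properly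
larger ideal of the `n`-adic completion `Â`; consequently `I` is integrally closed iff
`IÂ` is integrally closed. -/
theorem primary_reduction_iff_reduction_in_completion
    (A : Type*) [CommRing A] [IsNoetherianRing A] [IsLocalRing A]
    (I : Ideal A) (hprim : I.IsPrimary) (hrad : I.radical = IsLocalRing.maximalIdeal A) :
    ((∃ J : Ideal A, I < J ∧ IsReductionOf I J) ↔
      (∃ J' : Ideal (AdicCompletion (IsLocalRing.maximalIdeal A) A),
        Ideal.map (algebraMap A (AdicCompletion (IsLocalRing.maximalIdeal A) A)) I < J' ∧
        IsReductionOf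
          (Ideal.map (algebraMap A (AdicCompletion (IsLocalRing.maximalIdeal A) A)) I) J')) ∧
    (IsIntegrallyClosedIdeal I ↔
      IsIntegrallyClosedIdeal
        (Ideal.map (algebraMap A (AdicCompletion (IsLocalRing.maximalIdeal A) A)) I)) := by
  obtain ⟨k, hk⟩ := Ideal.exists_radical_pow_le_of_fg I (IsNoetherian.noetherian _)
  rw [hrad] at hk
  exact ⟨reduction_corr (IsLocalRing.maximalIdeal A) I k hk,
    intclosed_corr (IsLocalRing.maximalIdeal A) I k hk⟩
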